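/- arXiv:1006.2500 — 2 statements merged into one kernel-verified Lean document; each statement's English description precedes it below -/
import Mathlib

section
/- Let p be a prime, n ≥ 2 an integer, and q an integer coprime to p. For m ≥ 1 and x ∈ ℤ define O^m(x) = { w ∈ ZMod (p^m) : ∃ y ∈ ℕ, y ≡ x (mod p^m) and w ≡ q^y (mod p^m) }. Then for every y with 0 ≤ y ≤ p^{n-1} - 1, the reduction map ZMod (p^n) → ZMod (p^{n-1}) (taking a residue modulo p^n to its residue modulo p^{n-1}) restricts to a bijection from O^n(y) onto O^{n-1}(y). -/
/-- The set of out-neighbors of `x` in the exponentiation graph modulo `p^m`: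
residues modulo `p^m` of `q^y` over all natural numbers `y ≡ x (mod p^m)`. -/
def outNbrs (p m : ℕ) (q x : ℤ) : Set (ZMod (p ^ m)) :=
  {w | ∃ y : ℕ, ((y : ℤ) : ZMod (p ^ m)) = (x : ZMod (p ^ m)) ∧ (q : ZMod (p ^ m)) ^ y = w}

private lemma lift_pow_dvd {p M : ℕ} (hp : p.Prime) (hM : 1 ≤ M) {a : ℤ}
    (h : (p : ℤ) ^ M ∣ a - 1) : (p : ℤ) ^ (M + 1) ∣ a ^ p - 1 := by
  have hp1 : (p : ℤ) ∣ a - 1 := dvd_trans (dvd_pow_self _ (by omega)) h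
  have hsum : (p : ℤ) ∣ ∑ i ∈ Finset.range p, a ^ i := by
    have key : ∑ i ∈ Finset.range p, a ^ i
        = (∑ i ∈ Finset.range p, (a ^ i - 1)) + p := by
      rw [Finset.sum_sub_distrib]
      simp
    rw [key]
    refine dvd_add (Finset.dvd_sum fun i _ => ?_) dvd_rfl
    have : a - 1 ∣ a ^ i - 1 := by
      simpa using sub_dvd_pow_sub_pow a 1 i
    exact dvd_trans hp1 this
  have hfac : (∑ i ∈ Finset.range p, a ^ i) * (a - 1) = a ^ p - 1 := geom_sum_mul a p
  rw [← hfac]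
  calc ((p : ℤ)) ^ (M + 1) = (p : ℤ) * (p : ℤ) ^ M := by ring
    _ ∣ (∑ i ∈ Finset.range p, a ^ i) * (a - 1) := mul_dvd_mul hsum h

private lemma isUnit_q {p : ℕ} {q : ℤ} (hq : IsCoprime q (p : ℤ)) (k : ℕ) :
    IsUnit ((q : ℤ) : ZMod (p ^ k)) := by
  obtain ⟨a, b, hab⟩ := hq.pow_right (n := k)
  have h2 : (a * q + b * ((p ^ k : ℕ) : ℤ)) = 1 := by push_cast; linarith [hab]
  have h3 : (a : ZMod (p ^ k)) * (q : ZMod (p ^ k)) = 1 := by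
    have h4 := congrArg (fun z : ℤ => (z : ZMod (p ^ k))) h2
    simp only [Int.cast_add, Int.cast_mul, Int.cast_one, Int.cast_natCast,
      ZMod.natCast_self, mul_zero, add_zero] at h4
    exact h4
  exact IsUnit.of_mul_eq_one _ (mul_comm (a : ZMod (p ^ k)) _ ▸ h3)

theorem bijOn_castHom_outNbrs (p n : ℕ) (q : ℤ) (hp : p.Prime) (hn : 2 ≤ n)
    (hq : IsCoprime q (p : ℤ)) :
    ∀ y : ℕ, y ≤ p ^ (n - 1) - 1 →
      Set.BijOn (ZMod.castHom (pow_dvd_pow p (Nat.sub_le n 1)) (ZMod (p ^ (n - 1))))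
        (outNbrs p n q (y : ℤ)) (outNbrs p (n - 1) q (y : ℤ)) := by
  intro y _hy
  obtain ⟨m, rfl⟩ : ∃ m, n = m + 1 := ⟨n - 1, by omega⟩
  have hm : 1 ≤ m := by omega
  simp only [Nat.add_sub_cancel]
  set f := ZMod.castHom (pow_dvd_pow p (Nat.sub_le (m + 1) 1)) (ZMod (p ^ ((m + 1) - 1)))
  haveI : NeZero (p ^ m) := ⟨pow_ne_zero _ hp.pos.ne'⟩
  haveI : NeZero (p ^ (m + 1)) := ⟨pow_ne_zero _ hp.pos.ne'⟩
  set uM : (ZMod (p ^ m))ˣ := (isUnit_q hq m).unit with huM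
  set uN : (ZMod (p ^ (m + 1)))ˣ := (isUnit_q hq (m + 1)).unit with huN
  have huMc : (uM : ZMod (p ^ m)) = ((q : ℤ) : ZMod (p ^ m)) := (isUnit_q hq m).unit_spec
  have huNc : (uN : ZMod (p ^ (m + 1))) = ((q : ℤ) : ZMod (p ^ (m + 1))) :=
    (isUnit_q hq (m + 1)).unit_spec
  set d := orderOf uM with hd
  have hd_pos : 0 < d := orderOf_pos uM
  have hd_dvd : d ∣ p ^ (m - 1) * (p - 1) := by
    have := orderOf_dvd_card (x := uM)
    rwa [ZMod.card_units_eq_totient, Nat.totient_prime_pow hp hm] at this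
  -- gcd of p^(m+1) and d is a power of p dividing p^(m-1)
  have hcop : Nat.Coprime p (p - 1) :=
    (Nat.coprime_self_sub_right hp.one_lt.le).mpr (Nat.coprime_one_right p)
  have hgcd : Nat.gcd (p ^ (m + 1)) d ∣ p ^ (m - 1) := by
    obtain ⟨j, _, hj⟩ := (Nat.dvd_prime_pow hp).mp (Nat.gcd_dvd_left (p ^ (m + 1)) d)
    have hjd : p ^ j ∣ p ^ (m - 1) * (p - 1) := hj ▸ (Nat.gcd_dvd_right _ d).trans hd_dvd
    rw [hj]
    exact (Nat.Coprime.pow_left j hcop).dvd_of_dvd_mul_right hjd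
  -- key: order of q mod p^(m+1) divides p * d
  have hqd1 : ((q : ℤ) : ZMod (p ^ m)) ^ d = 1 := by
    have : (uM ^ d : (ZMod (p ^ m))ˣ) = 1 := pow_orderOf_eq_one uM
    calc ((q : ℤ) : ZMod (p ^ m)) ^ d = ((uM ^ d : (ZMod (p ^ m))ˣ) : ZMod (p ^ m)) := by
          rw [Units.val_pow_eq_pow_val, huMc]
      _ = 1 := by rw [this, Units.val_one]
  have hlift : ((q : ℤ) : ZMod (p ^ (m + 1))) ^ (d * p) = 1 := by
    have h1 : (q ^ d : ℤ) ≡ 1 [ZMOD (p ^ m : ℕ)] := by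
      have := (ZMod.intCast_eq_intCast_iff (q ^ d) 1 (p ^ m)).mp (by push_cast; exact hqd1)
      exact this
    have h2 : ((p : ℤ)) ^ m ∣ q ^ d - 1 := by
      have h5 := Int.ModEq.dvd h1
      push_cast at h5
      exact dvd_sub_comm.mp h5
    have h3 : ((p : ℤ)) ^ (m + 1) ∣ (q ^ d) ^ p - 1 := lift_pow_dvd hp hm h2
    have h4 : (q ^ (d * p) : ℤ) ≡ 1 [ZMOD (p ^ (m + 1) : ℕ)] := by
      rw [pow_mul]
      have : ((p ^ (m + 1) : ℕ) : ℤ) ∣ 1 - (q ^ d) ^ p := by push_cast; exact dvd_sub_comm.mp h3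
      exact Int.modEq_iff_dvd.mpr this
    have := (ZMod.intCast_eq_intCast_iff (q ^ (d * p)) 1 (p ^ (m + 1))).mpr h4
    push_cast at this
    exact this
  have hordN : orderOf uN ∣ p * d := by
    have : uN ^ (d * p) = 1 := by
      apply Units.ext
      rw [Units.val_pow_eq_pow_val, huNc, Units.val_one]
      exact hlift
    exact (orderOf_dvd_of_pow_eq_one this).trans (by rw [mul_comm])
  -- p * d divides lcm d (p^(m+1))
  have hpd_lcm : p * d ∣ Nat.lcm d (p ^ (m + 1)) := by
    set g := Nat.gcd (p ^ (m + 1)) d with hgdef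
    obtain ⟨c, hc⟩ := hgcd
    have hglcm : g * Nat.lcm d (p ^ (m + 1)) = d * p ^ (m + 1) := by
      rw [hgdef, Nat.gcd_comm]
      exact Nat.gcd_mul_lcm d (p ^ (m + 1))
    have hgpos : 0 < g := Nat.gcd_pos_of_pos_left _ (pow_pos hp.pos _)
    have hpow : p ^ (m + 1) = p ^ (m - 1) * p ^ 2 := by
      rw [← pow_add]
      congr 1
      omega
    have hexp : d * p ^ (m + 1) = g * (d * c * p ^ 2) := by
      rw [hpow, hc]
      ring
    have hlcm_eq : Nat.lcm d (p ^ (m + 1)) = d * c * p ^ 2 := by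
      rw [hexp] at hglcm
      exact Nat.eq_of_mul_eq_mul_left hgpos hglcm
    rw [hlcm_eq]
    exact ⟨c * p, by ring⟩
  -- now the three parts of BijOn
  have hmaps : Set.MapsTo f (outNbrs p (m + 1) q (y : ℤ)) (outNbrs p m q (y : ℤ)) := by
    rintro w ⟨y1, hy1, rfl⟩
    refine ⟨y1, ?_, ?_⟩
    · have := congrArg f hy1
      simpa only [map_intCast] using this
    · rw [map_pow, map_intCast]
  refine ⟨hmaps, ?_, ?_⟩
  · -- injective
    rintro w1 ⟨y1, hy1, rfl⟩ w2 ⟨y2, hy2, rfl⟩ hf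
    rw [map_pow, map_intCast, map_pow, map_intCast] at hf
    have hN : y1 ≡ y2 [MOD p ^ (m + 1)] := by
      rw [← ZMod.natCast_eq_natCast_iff]
      have hy1' : ((y1 : ℕ) : ZMod (p ^ (m + 1))) = ((y : ℤ) : ZMod (p ^ (m + 1))) := by
        rw [← hy1]; push_cast; ring
      have hy2' : ((y2 : ℕ) : ZMod (p ^ (m + 1))) = ((y : ℤ) : ZMod (p ^ (m + 1))) := by
        rw [← hy2]; push_cast; ring
      rw [hy1', hy2']
    have hD : y1 ≡ y2 [MOD d] := by
      rw [hd, ← pow_eq_pow_iff_modEq]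
      apply Units.ext
      rw [Units.val_pow_eq_pow_val, Units.val_pow_eq_pow_val, huMc]
      exact hf
    have hlcm : y1 ≡ y2 [MOD Nat.lcm d (p ^ (m + 1))] := Nat.mod_lcm hD hN
    have hord : y1 ≡ y2 [MOD orderOf uN] :=
      hlcm.of_dvd (hordN.trans hpd_lcm)
    have : uN ^ y1 = uN ^ y2 := pow_eq_pow_iff_modEq.mpr hord
    have hv := congrArg (Units.val) this
    rw [Units.val_pow_eq_pow_val, Units.val_pow_eq_pow_val, huNc] at hv
    exact hv
  · -- surjective
    rintro w' ⟨y', hy', rfl⟩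
    have hy'M : y' ≡ y [MOD p ^ m] := by
      rw [← ZMod.natCast_eq_natCast_iff]
      rw [show ((y' : ℕ) : ZMod (p ^ m)) = ((y' : ℤ) : ZMod (p ^ m)) by push_cast; ring]
      rw [hy']; push_cast; ring
    have hggm : Nat.gcd (p ^ (m + 1)) d ∣ p ^ m :=
      hgcd.trans (pow_dvd_pow p (by omega))
    have hcr : y ≡ y' [MOD Nat.gcd (p ^ (m + 1)) d] :=
      (hy'M.symm).of_dvd hggm
    obtain ⟨k, hk1, hk2⟩ := Nat.chineseRemainder' hcr
    refine ⟨(q : ZMod (p ^ (m + 1))) ^ k, ⟨k, ?_, rfl⟩, ?_⟩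
    · have hkk : ((k : ℕ) : ZMod (p ^ (m + 1))) = ((y : ℕ) : ZMod (p ^ (m + 1))) :=
        (ZMod.natCast_eq_natCast_iff _ _ _).mpr hk1
      push_cast at hkk ⊢
      exact hkk
    · rw [map_pow, map_intCast]
      have : uM ^ k = uM ^ y' := pow_eq_pow_iff_modEq.mpr hk2
      have hv := congrArg (Units.val) this
      rwa [Units.val_pow_eq_pow_val, Units.val_pow_eq_pow_val, huMc] at hv
end

section
/- Let p be a prime, n ≥ 2 an integer, q an integer coprime to p, and k a positive integer. Let A_m denote the adjacency matrix of the exponentiation graph Γ_{p,m,q}. Then trace(A_n^k) = trace(A_{n-1}^k). -/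
open Classical

/-- Adjacency matrix of the exponentiation graph `Γ_{p,m,q}`:
entry `1` at `(x, w)` iff there is `y : ℕ` with `y ≡ x (mod p^m)` and `w ≡ q^y (mod p^m)`. -/
noncomputable def expAdj (p m : ℕ) (q : ℤ) [Fact p.Prime] :
    Matrix (ZMod (p ^ m)) (ZMod (p ^ m)) ℤ := fun x w =>
  if ∃ y : ℕ, (y : ZMod (p ^ m)) = x ∧ ((q : ZMod (p ^ m)) ^ y = w) then 1 else 0

namespace ExpAdjAux

variable {p : ℕ} [hp : Fact p.Prime] {q : ℤ}

lemma neZero_pow (j : ℕ) : NeZero (p ^ j) := ⟨pow_ne_zero j hp.out.ne_zero⟩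

lemma isUnit_q (j : ℕ) (hq : IsCoprime q (p : ℤ)) : IsUnit (q : ZMod (p ^ j)) := by
  obtain ⟨a, b, hab⟩ := (hq.pow_right (n := j))
  refine IsUnit.of_mul_eq_one ((a : ZMod (p ^ j))) ?_
  have hp0 : (((p : ℤ) ^ j : ℤ) : ZMod (p ^ j)) = 0 := by
    have := ZMod.natCast_self (p ^ j)
    push_cast at this ⊢
    exact this
  have h2 : ((a * q + b * (p : ℤ) ^ j : ℤ) : ZMod (p ^ j)) = 1 := by rw [hab]; simp
  push_cast at h2
  push_cast at hp0
  rw [hp0] at h2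
  rw [mul_comm]
  simpa using h2

lemma gcd_pow_dvd (j e : ℕ) (hj : 1 ≤ j) (he : e ∣ Nat.totient (p ^ j)) :
    Nat.gcd (p ^ j) e ∣ p ^ (j - 1) := by
  have h1 : Nat.gcd (p ^ j) e ∣ Nat.gcd (p ^ j) (Nat.totient (p ^ j)) :=
    Nat.dvd_gcd (Nat.gcd_dvd_left _ _) ((Nat.gcd_dvd_right _ _).trans he)
  have h2 : Nat.totient (p ^ j) = p ^ (j - 1) * (p - 1) := Nat.totient_prime_pow hp.out hj
  have h3 : p ^ j = p ^ (j - 1) * p := by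
    conv_lhs => rw [show j = (j - 1) + 1 by omega]
    rw [pow_succ]
  have h4 : Nat.gcd p (p - 1) = 1 := by
    have := (Nat.Prime.coprime_iff_not_dvd hp.out).mpr
      (show ¬ p ∣ (p - 1) by
        intro h
        have h2l := hp.out.two_le
        have hple := Nat.le_of_dvd (by omega) h
        omega)
    exact this
  have hc : Nat.gcd (p ^ j) (p ^ (j - 1) * (p - 1)) = p ^ (j - 1) := by
    rw [h3, Nat.gcd_mul_left, h4, mul_one]
  rw [h2, hc] at h1
  exact h1

lemma order_dvd_totient (j : ℕ) (u : (ZMod (p ^ j))ˣ) [NeZero (p ^ j)] :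
    orderOf u ∣ Nat.totient (p ^ j) := by
  rw [← ZMod.card_units_eq_totient]
  exact orderOf_dvd_card

lemma pow_p_one (j : ℕ) (hj : 1 ≤ j) (a : ℤ) (ha : ((p : ℤ)) ^ j ∣ a - 1) :
    ((p : ℤ)) ^ (j + 1) ∣ a ^ p - 1 := by
  have hgeom : (∑ i ∈ Finset.range p, a ^ i) * (a - 1) = a ^ p - 1 := geom_sum_mul a p
  have hp1 : (p : ℤ) ∣ a - 1 :=
    dvd_trans (dvd_pow_self (p : ℤ) (show j ≠ 0 by omega)) ha
  have hsum : (p : ℤ) ∣ ∑ i ∈ Finset.range p, a ^ i := by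
    have hterm : (p : ℤ) ∣ ∑ i ∈ Finset.range p, (a ^ i - 1) :=
      Finset.dvd_sum fun i _ => hp1.trans (by simpa using sub_dvd_pow_sub_pow a 1 i)
    have hsplit : ∑ i ∈ Finset.range p, (a ^ i - 1)
        = (∑ i ∈ Finset.range p, a ^ i) - p := by
      rw [Finset.sum_sub_distrib]
      simp
    rw [hsplit] at hterm
    have := dvd_add hterm (dvd_refl (p : ℤ))
    simpa using this
  rw [← hgeom, pow_succ, mul_comm ((p : ℤ) ^ j) _]
  exact mul_dvd_mul hsum ha

lemma order_dvd_lcm (m : ℕ) (hm : 1 ≤ m)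
    (u : (ZMod (p ^ (m + 1)))ˣ) (hu : (u : ZMod (p ^ (m + 1))) = (q : ZMod (p ^ (m + 1))))
    (u' : (ZMod (p ^ m))ˣ) (hu' : (u' : ZMod (p ^ m)) = (q : ZMod (p ^ m))) :
    orderOf u ∣ Nat.lcm (orderOf u') (p ^ m) := by
  haveI := neZero_pow (p := p) m
  haveI := neZero_pow (p := p) (m + 1)
  set d' := orderOf u' with hd'
  have h1 : ((p : ℤ)) ^ m ∣ q ^ d' - 1 := by
    have hq1 : (q : ZMod (p ^ m)) ^ d' = 1 := by
      rw [← hu']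
      have h := pow_orderOf_eq_one u'
      calc (u' : ZMod (p ^ m)) ^ d' = ((u' ^ d' : (ZMod (p ^ m))ˣ) : ZMod (p ^ m)) := by
            push_cast; rfl
        _ = 1 := by rw [h]; rfl
    have h0 : ((q ^ d' - 1 : ℤ) : ZMod (p ^ m)) = 0 := by push_cast; rw [hq1]; ring
    have h := (ZMod.intCast_zmod_eq_zero_iff_dvd _ _).mp h0
    push_cast at h
    exact h
  have h2 : ((p : ℤ)) ^ (m + 1) ∣ (q ^ d') ^ p - 1 := pow_p_one m hm _ h1
  have h3 : u ^ (d' * p) = 1 := by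
    apply Units.ext
    have h0 : (((q ^ d') ^ p - 1 : ℤ) : ZMod (p ^ (m + 1))) = 0 := by
      rw [ZMod.intCast_zmod_eq_zero_iff_dvd]
      push_cast
      exact h2
    have hq1 : (q : ZMod (p ^ (m + 1))) ^ (d' * p) = 1 := by
      push_cast at h0
      rw [pow_mul]
      linear_combination h0
    calc ((u ^ (d' * p) : (ZMod (p ^ (m + 1)))ˣ) : ZMod (p ^ (m + 1)))
        = (u : ZMod (p ^ (m + 1))) ^ (d' * p) := by push_cast; rfl
      _ = 1 := by rw [hu, hq1]
      _ = ((1 : (ZMod (p ^ (m + 1)))ˣ) : ZMod (p ^ (m + 1))) := rfl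
  have h4 : orderOf u ∣ d' * p := orderOf_dvd_of_pow_eq_one h3
  have hg : Nat.gcd (p ^ m) d' ∣ p ^ (m - 1) :=
    gcd_pow_dvd m d' hm (order_dvd_totient m u')
  have hg' : Nat.gcd d' (p ^ m) ∣ p ^ (m - 1) := by rwa [Nat.gcd_comm]
  obtain ⟨t, ht⟩ := hg'
  have hgpos : 0 < Nat.gcd d' (p ^ m) :=
    Nat.gcd_pos_of_pos_right _ (pow_pos hp.out.pos m)
  have h5 : d' * p ∣ Nat.lcm d' (p ^ m) := by
    have hlcm : Nat.lcm d' (p ^ m) = d' * (p ^ m / Nat.gcd d' (p ^ m)) := by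
      rw [Nat.lcm, Nat.mul_div_assoc _ (Nat.gcd_dvd_right d' (p ^ m))]
    have hpm' : p ^ m = (t * p) * Nat.gcd d' (p ^ m) := by
      conv_lhs => rw [← Nat.sub_add_cancel hm, pow_succ, ht]
      ring
    have hdiv : p ^ m / Nat.gcd d' (p ^ m) = t * p :=
      Nat.div_eq_of_eq_mul_left hgpos hpm'
    rw [hlcm, hdiv]
    exact ⟨t, by ring⟩
  exact h4.trans h5

lemma pow_eq_of (m : ℕ) (hm : 1 ≤ m) (hq : IsCoprime q (p : ℤ)) (y₁ y₂ : ℕ)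
    (h12 : (y₁ : ZMod (p ^ m)) = (y₂ : ZMod (p ^ m)))
    (hqq : (q : ZMod (p ^ m)) ^ y₁ = (q : ZMod (p ^ m)) ^ y₂) :
    (q : ZMod (p ^ (m + 1))) ^ y₁ = (q : ZMod (p ^ (m + 1))) ^ y₂ := by
  haveI := neZero_pow (p := p) m
  haveI := neZero_pow (p := p) (m + 1)
  have hu := isUnit_q (p := p) (m + 1) hq
  have hu' := isUnit_q (p := p) m hq
  set u := hu.unit with hudef
  set u' := hu'.unit with hu'def
  have huspec : (u : ZMod (p ^ (m + 1))) = (q : ZMod (p ^ (m + 1))) := hu.unit_spec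
  have hu'spec : (u' : ZMod (p ^ m)) = (q : ZMod (p ^ m)) := hu'.unit_spec
  set d' := orderOf u' with hd'
  have hmod1 : y₁ ≡ y₂ [MOD d'] := by
    have h : u' ^ y₁ = u' ^ y₂ := by
      apply Units.ext
      push_cast
      rw [hu'spec]
      exact hqq
    exact pow_eq_pow_iff_modEq.mp h
  have hmod2 : y₁ ≡ y₂ [MOD p ^ m] := (ZMod.natCast_eq_natCast_iff _ _ _).mp h12
  have hdvd1 : (d' : ℤ) ∣ (y₂ : ℤ) - (y₁ : ℤ) := Nat.modEq_iff_dvd.mp hmod1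
  have hdvd2 : ((p ^ m : ℕ) : ℤ) ∣ (y₂ : ℤ) - (y₁ : ℤ) := Nat.modEq_iff_dvd.mp hmod2
  have hlcm : ((Nat.lcm d' (p ^ m) : ℕ) : ℤ) ∣ (y₂ : ℤ) - (y₁ : ℤ) := by
    have h := Int.lcm_dvd (Int.dvd_natAbs.mpr hdvd1) (Int.dvd_natAbs.mpr hdvd2)
    simpa [Int.lcm, Int.natAbs_pow, Int.natAbs_natCast, Int.natCast_dvd] using h
  have hmodl : y₁ ≡ y₂ [MOD Nat.lcm d' (p ^ m)] := Nat.modEq_iff_dvd.mpr hlcm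
  have hmodu : y₁ ≡ y₂ [MOD orderOf u] :=
    hmodl.of_dvd (order_dvd_lcm m hm u huspec u' hu'spec)
  have h : u ^ y₁ = u ^ y₂ := pow_eq_pow_iff_modEq.mpr hmodu
  calc (q : ZMod (p ^ (m + 1))) ^ y₁ = (u : ZMod (p ^ (m + 1))) ^ y₁ := by rw [huspec]
    _ = ((u ^ y₁ : (ZMod (p ^ (m + 1)))ˣ) : ZMod (p ^ (m + 1))) := by push_cast; rfl
    _ = ((u ^ y₂ : (ZMod (p ^ (m + 1)))ˣ) : ZMod (p ^ (m + 1))) := by rw [h]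
    _ = (u : ZMod (p ^ (m + 1))) ^ y₂ := by push_cast; rfl
    _ = (q : ZMod (p ^ (m + 1))) ^ y₂ := by rw [huspec]

noncomputable def Bmat (p : ℕ) [Fact p.Prime] (m : ℕ) :
    Matrix (ZMod (p ^ (m + 1))) (ZMod (p ^ m)) ℤ :=
  fun x v => if ZMod.castHom (pow_dvd_pow p (Nat.le_succ m)) (ZMod (p ^ m)) x = v then 1 else 0

noncomputable def Cmat (p : ℕ) [Fact p.Prime] (q : ℤ) (m : ℕ) :
    Matrix (ZMod (p ^ m)) (ZMod (p ^ (m + 1))) ℤ :=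
  fun v w => if ∃ y : ℕ, (y : ZMod (p ^ m)) = v ∧ (q : ZMod (p ^ (m + 1))) ^ y = w then 1 else 0

lemma A_eq (m : ℕ) (hm : 1 ≤ m) (hq : IsCoprime q (p : ℤ)) :
    expAdj p (m + 1) q = Bmat p m * Cmat p q m := by
  haveI := neZero_pow (p := p) m
  haveI := neZero_pow (p := p) (m + 1)
  have hu := isUnit_q (p := p) (m + 1) hq
  set u := hu.unit with hudef
  have huspec : (u : ZMod (p ^ (m + 1))) = (q : ZMod (p ^ (m + 1))) := hu.unit_spec
  set d := orderOf u with hd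
  set π := ZMod.castHom (pow_dvd_pow p (Nat.le_succ m)) (ZMod (p ^ m)) with hπ
  funext x w
  rw [Matrix.mul_apply]
  have hterm : ∀ v, Bmat p m x v * Cmat p q m v w
      = if π x = v then Cmat p q m v w else 0 := by
    intro v
    rw [Bmat, ← hπ]
    exact boole_mul _ _
  rw [Finset.sum_congr rfl (fun v _ => hterm v)]
  rw [Finset.sum_ite_eq Finset.univ (π x) (fun v => Cmat p q m v w)]
  rw [if_pos (Finset.mem_univ _)]
  show (if _ then (1 : ℤ) else 0) = (if _ then (1 : ℤ) else 0)
  refine if_congr ?_ rfl rfl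
  constructor
  · rintro ⟨y, hy, hw⟩
    exact ⟨y, by rw [← hy, map_natCast], hw⟩
  · rintro ⟨y, hy, hw⟩
    have hxval : ((x.val : ℕ) : ZMod (p ^ (m + 1))) = x := ZMod.natCast_rightInverse x
    have hπx : π x = ((x.val : ℕ) : ZMod (p ^ m)) := by
      conv_lhs => rw [← hxval]
      rw [map_natCast]
    have hyx : y ≡ x.val [MOD p ^ m] :=
      (ZMod.natCast_eq_natCast_iff _ _ _).mp (hy.trans hπx)
    have hgcd : Nat.gcd (p ^ (m + 1)) d ∣ p ^ m := by
      have h := gcd_pow_dvd (m + 1) d (by omega) (order_dvd_totient (m + 1) u)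
      simpa using h
    have hcompat : x.val ≡ y [MOD Nat.gcd (p ^ (m + 1)) d] :=
      (hyx.symm).of_dvd hgcd
    obtain ⟨y', hy'1, hy'2⟩ := Nat.chineseRemainder' hcompat
    refine ⟨y', ?_, ?_⟩
    · calc ((y' : ℕ) : ZMod (p ^ (m + 1))) = ((x.val : ℕ) : ZMod (p ^ (m + 1))) :=
            (ZMod.natCast_eq_natCast_iff _ _ _).mpr hy'1
        _ = x := hxval
    · have h : u ^ y' = u ^ y := pow_eq_pow_iff_modEq.mpr hy'2
      calc (q : ZMod (p ^ (m + 1))) ^ y' = (u : ZMod (p ^ (m + 1))) ^ y' := by rw [huspec]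
        _ = ((u ^ y' : (ZMod (p ^ (m + 1)))ˣ) : ZMod (p ^ (m + 1))) := by push_cast; rfl
        _ = ((u ^ y : (ZMod (p ^ (m + 1)))ˣ) : ZMod (p ^ (m + 1))) := by rw [h]
        _ = (u : ZMod (p ^ (m + 1))) ^ y := by push_cast; rfl
        _ = (q : ZMod (p ^ (m + 1))) ^ y := by rw [huspec]
        _ = w := hw

lemma B_eq (m : ℕ) (hm : 1 ≤ m) (hq : IsCoprime q (p : ℤ)) :
    Cmat p q m * Bmat p m = expAdj p m q := by
  haveI := neZero_pow (p := p) m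
  haveI := neZero_pow (p := p) (m + 1)
  set π := ZMod.castHom (pow_dvd_pow p (Nat.le_succ m)) (ZMod (p ^ m)) with hπ
  funext v w
  rw [Matrix.mul_apply]
  have hterm : ∀ x, Cmat p q m v x * Bmat p m x w
      = if (∃ y : ℕ, (y : ZMod (p ^ m)) = v ∧ (q : ZMod (p ^ (m + 1))) ^ y = x) ∧ π x = w
        then (1 : ℤ) else 0 := by
    intro x
    rw [Cmat, Bmat, ← hπ]
    by_cases h1 : ∃ y : ℕ, (y : ZMod (p ^ m)) = v ∧ (q : ZMod (p ^ (m + 1))) ^ y = x <;>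
      by_cases h2 : π x = w <;> simp [h1, h2]
  rw [Finset.sum_congr rfl (fun x _ => hterm x)]
  show _ = (if _ then (1 : ℤ) else 0)
  by_cases htar : ∃ y : ℕ, (y : ZMod (p ^ m)) = v ∧ (q : ZMod (p ^ m)) ^ y = w
  · rw [if_pos htar]
    obtain ⟨y₀, hy₀, hw₀⟩ := htar
    set w₀ := (q : ZMod (p ^ (m + 1))) ^ y₀ with hw₀def
    have key : ∀ x : ZMod (p ^ (m + 1)),
        ((∃ y : ℕ, (y : ZMod (p ^ m)) = v ∧ (q : ZMod (p ^ (m + 1))) ^ y = x) ∧ π x = w)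
          ↔ x = w₀ := by
      intro x
      constructor
      · rintro ⟨⟨y, hy, hx⟩, hπx⟩
        have hcast : (q : ZMod (p ^ m)) ^ y = (q : ZMod (p ^ m)) ^ y₀ := by
          have h1 : π ((q : ZMod (p ^ (m + 1))) ^ y) = (q : ZMod (p ^ m)) ^ y := by
            rw [map_pow, map_intCast]
          rw [← h1, hx, hπx, ← hw₀]
        have h12 : (y : ZMod (p ^ m)) = (y₀ : ZMod (p ^ m)) := by rw [hy, hy₀]
        rw [← hx, hw₀def]
        exact pow_eq_of m hm hq y y₀ h12 hcast
      · rintro rfl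
        refine ⟨⟨y₀, hy₀, rfl⟩, ?_⟩
        rw [hw₀def, map_pow, map_intCast, hw₀]
    rw [Finset.sum_congr rfl (fun x _ => if_congr (key x) rfl rfl)]
    rw [Finset.sum_ite_eq' Finset.univ w₀ (fun _ => (1 : ℤ))]
    rw [if_pos (Finset.mem_univ _)]
  · rw [if_neg htar]
    apply Finset.sum_eq_zero
    intro x _
    rw [if_neg]
    rintro ⟨⟨y, hy, hx⟩, hπx⟩
    refine htar ⟨y, hy, ?_⟩
    rw [← hπx, ← hx, map_pow, map_intCast]

lemma trace_aux {I J : Type*} [Fintype I] [Fintype J] [DecidableEq I] [DecidableEq J]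
    (B : Matrix I J ℤ) (C : Matrix J I ℤ) (j : ℕ) :
    Matrix.trace ((B * C) ^ (j + 1)) = Matrix.trace ((C * B) ^ (j + 1)) := by
  have h : ∀ i : ℕ, (B * C) ^ (i + 1) = B * ((C * B) ^ i * C) := by
    intro i
    induction i with
    | zero => simp
    | succ i ih =>
      rw [pow_succ, ih, pow_succ]
      simp only [Matrix.mul_assoc]
  rw [h j, Matrix.trace_mul_comm, Matrix.mul_assoc, ← pow_succ]

end ExpAdjAux

theorem trace_pow_expAdj_stable (p n k : ℕ) (q : ℤ) [Fact p.Prime]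
    (hn : 2 ≤ n) (hk : 0 < k) (hq : IsCoprime q (p : ℤ)) :
    Matrix.trace ((expAdj p n q) ^ k) = Matrix.trace ((expAdj p (n - 1) q) ^ k) := by
  obtain ⟨m, rfl⟩ : ∃ m, n = m + 1 := ⟨n - 1, by omega⟩
  have hm : 1 ≤ m := by omega
  obtain ⟨j, rfl⟩ : ∃ j, k = j + 1 := ⟨k - 1, by omega⟩
  haveI := ExpAdjAux.neZero_pow (p := p) m
  haveI := ExpAdjAux.neZero_pow (p := p) (m + 1)
  show Matrix.trace ((expAdj p (m + 1) q) ^ (j + 1))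
      = Matrix.trace ((expAdj p m q) ^ (j + 1))
  rw [ExpAdjAux.A_eq m hm hq, ← ExpAdjAux.B_eq m hm hq]
  exact ExpAdjAux.trace_aux _ _ j
end
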